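/- Fix a > 1 and λ = (a−1)/a ∈ (0,1). Let s_i and c_i be sequences of positive reals with |s_i − i^{−a}| < 2e^{−i} and (a−1)^{-1} i^{1−a} − e^{−i} < c_i < (a−1)^{-1}(i−1)^{1−a} + e^{−i} for all i ≥ 1, and set g_i = i·s_i + c_i. Then limsup_{i→∞} g_i / s_i^λ is a finite positive real number (indeed lim g_i/s_i^λ = a/(a−1)). -/

import Mathlib

open Filter

/-- With `λ = (a-1)/a`, `s i ≈ i^{-a}` and `c i ≈ (a-1)⁻¹ i^{1-a}`, the ratio
`(i·s i + c i)/(s i)^λ` converges to the finite positive number `a/(a-1)`. -/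
theorem stmt_8 (a : ℝ) (ha : 1 < a) (s c : ℕ → ℝ)
    (hspos : ∀ i, 0 < s i) (hcpos : ∀ i, 0 < c i)
    (hs : ∀ i : ℕ, 1 ≤ i → |s i - (i : ℝ) ^ (-a)| < 2 * Real.exp (-(i : ℝ)))
    (hc : ∀ i : ℕ, 1 ≤ i →
      (a - 1)⁻¹ * (i : ℝ) ^ (1 - a) - Real.exp (-(i : ℝ)) < c i ∧
      c i < (a - 1)⁻¹ * ((i : ℝ) - 1) ^ (1 - a) + Real.exp (-(i : ℝ))) :
    Tendsto (fun i : ℕ => ((i : ℝ) * s i + c i) / s i ^ ((a - 1) / a)) atTop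
      (nhds (a / (a - 1))) := by
  have ha0 : (0:ℝ) < a := lt_trans one_pos ha
  have ha1 : (0:ℝ) < a - 1 := by linarith
  set lam : ℝ := (a - 1) / a with hlam
  -- generic decay lemma
  have hA : ∀ b : ℝ, Tendsto (fun i : ℕ => (i:ℝ) ^ b * Real.exp (-(i:ℝ))) atTop (nhds 0) := by
    intro b
    have := (tendsto_rpow_mul_exp_neg_mul_atTop_nhds_zero b 1 one_pos).comp
      tendsto_natCast_atTop_atTop (α := ℕ)
    simpa [Function.comp_def] using this
  -- t i = s i * i^a → 1
  have ht : Tendsto (fun i : ℕ => s i * (i:ℝ) ^ a) atTop (nhds 1) := by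
    have h0 : Tendsto (fun i : ℕ => s i * (i:ℝ) ^ a - 1) atTop (nhds 0) := by
      have hbd : ∀ᶠ i : ℕ in atTop,
          ‖s i * (i:ℝ) ^ a - 1‖ ≤ 2 * ((i:ℝ) ^ a * Real.exp (-(i:ℝ))) := by
        filter_upwards [eventually_ge_atTop 1] with i hi
        have hn : (0:ℝ) < (i:ℝ) := by exact_mod_cast hi
        have h1 : (i:ℝ) ^ (-a) * (i:ℝ) ^ a = 1 := by
          rw [← Real.rpow_add hn]; simp
        have e : s i * (i:ℝ) ^ a - 1 = (s i - (i:ℝ) ^ (-a)) * (i:ℝ) ^ a := by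
          rw [sub_mul, h1]
        rw [e]
        rw [Real.norm_eq_abs, abs_mul, abs_of_nonneg (Real.rpow_nonneg hn.le a)]
        have := (hs i hi).le
        calc |s i - (i:ℝ) ^ (-a)| * (i:ℝ) ^ a
            ≤ (2 * Real.exp (-(i:ℝ))) * (i:ℝ) ^ a :=
              mul_le_mul_of_nonneg_right this (Real.rpow_nonneg hn.le a)
          _ = 2 * ((i:ℝ) ^ a * Real.exp (-(i:ℝ))) := by ring
      exact squeeze_zero_norm' hbd (by simpa using (hA a).const_mul 2)
    have := h0.add_const 1
    simpa using this
  -- u i = c i * i^(a-1) → (a-1)⁻¹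
  have hu : Tendsto (fun i : ℕ => c i * (i:ℝ) ^ (a - 1)) atTop (nhds (a - 1)⁻¹) := by
    have hone : Tendsto (fun i : ℕ => 1 - 1 / (i:ℝ)) atTop (nhds 1) := by
      have := tendsto_one_div_atTop_nhds_zero_nat.const_sub (1:ℝ)
      simpa using this
    have hL : Tendsto (fun i : ℕ => (a - 1)⁻¹ - Real.exp (-(i:ℝ)) * (i:ℝ) ^ (a - 1)) atTop
        (nhds (a - 1)⁻¹) := by
      have h2 : Tendsto (fun i : ℕ => Real.exp (-(i:ℝ)) * (i:ℝ) ^ (a - 1)) atTop (nhds 0) := by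
        have := hA (a - 1); simpa [mul_comm] using this
      simpa using (tendsto_const_nhds (x := (a-1)⁻¹)).sub h2
    have hU : Tendsto (fun i : ℕ =>
        (a - 1)⁻¹ * (1 - 1 / (i:ℝ)) ^ (1 - a) + Real.exp (-(i:ℝ)) * (i:ℝ) ^ (a - 1)) atTop
        (nhds (a - 1)⁻¹) := by
      have h2 : Tendsto (fun i : ℕ => Real.exp (-(i:ℝ)) * (i:ℝ) ^ (a - 1)) atTop (nhds 0) := by
        have := hA (a - 1); simpa [mul_comm] using this
      have h3 := (hone.rpow_const (Or.inl one_ne_zero) (p := 1 - a)).const_mul (a - 1)⁻¹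
      have := h3.add h2
      simpa using this
    apply tendsto_of_tendsto_of_tendsto_of_le_of_le' hL hU
    · filter_upwards [eventually_ge_atTop 1] with i hi
      have hn : (0:ℝ) < (i:ℝ) := by exact_mod_cast hi
      have h1 : (i:ℝ) ^ (1 - a) * (i:ℝ) ^ (a - 1) = 1 := by
        rw [← Real.rpow_add hn]; simp
      have hp : (0:ℝ) < (i:ℝ) ^ (a - 1) := Real.rpow_pos_of_pos hn _
      have := mul_le_mul_of_nonneg_right (hc i hi).1.le hp.le
      calc (a - 1)⁻¹ - Real.exp (-(i:ℝ)) * (i:ℝ) ^ (a - 1)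
          = ((a - 1)⁻¹ * (i:ℝ) ^ (1 - a) - Real.exp (-(i:ℝ))) * (i:ℝ) ^ (a - 1) := by
            rw [sub_mul, mul_assoc, h1]; ring
        _ ≤ c i * (i:ℝ) ^ (a - 1) := this
    · filter_upwards [eventually_ge_atTop 2] with i hi
      have hi1 : (1:ℕ) ≤ i := le_trans one_le_two hi
      have hn : (0:ℝ) < (i:ℝ) := by exact_mod_cast hi1
      have hn2 : (2:ℝ) ≤ (i:ℝ) := by exact_mod_cast hi
      have hm : (0:ℝ) < (i:ℝ) - 1 := by linarith
      have hp : (0:ℝ) < (i:ℝ) ^ (a - 1) := Real.rpow_pos_of_pos hn _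
      have key : ((i:ℝ) - 1) ^ (1 - a) * (i:ℝ) ^ (a - 1) = (1 - 1 / (i:ℝ)) ^ (1 - a) := by
        have h4 : (1 - 1 / (i:ℝ)) = ((i:ℝ) - 1) / (i:ℝ) := by field_simp
        rw [h4, Real.div_rpow hm.le hn.le]
        rw [div_eq_mul_inv, ← Real.rpow_neg hn.le]
        ring_nf
      have := mul_le_mul_of_nonneg_right (hc i hi1).2.le hp.le
      calc c i * (i:ℝ) ^ (a - 1)
          ≤ ((a - 1)⁻¹ * ((i:ℝ) - 1) ^ (1 - a) + Real.exp (-(i:ℝ))) * (i:ℝ) ^ (a - 1) := this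
        _ = (a - 1)⁻¹ * (1 - 1 / (i:ℝ)) ^ (1 - a) + Real.exp (-(i:ℝ)) * (i:ℝ) ^ (a - 1) := by
            rw [add_mul, mul_assoc, key]
    -- combine
  have hF : Tendsto (fun i : ℕ =>
      (s i * (i:ℝ) ^ a) ^ a⁻¹ + (c i * (i:ℝ) ^ (a - 1)) * (s i * (i:ℝ) ^ a) ^ (-lam)) atTop
      (nhds (a / (a - 1))) := by
    have h1 := ht.rpow_const (Or.inl one_ne_zero) (p := a⁻¹)
    have h2 := hu.mul (ht.rpow_const (Or.inl one_ne_zero) (p := -lam))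
    have h3 := h1.add h2
    have he : (1:ℝ) ^ a⁻¹ + (a - 1)⁻¹ * (1:ℝ) ^ (-lam) = a / (a - 1) := by
      rw [Real.one_rpow, Real.one_rpow]
      field_simp
      ring
    rwa [he] at h3
  apply hF.congr'
  filter_upwards [eventually_ge_atTop 1] with i hi
  have hn : (0:ℝ) < (i:ℝ) := by exact_mod_cast hi
  have hx : 0 < s i := hspos i
  have e1 : (s i * (i:ℝ) ^ a) ^ a⁻¹ = (i:ℝ) * s i ^ a⁻¹ := by
    rw [Real.mul_rpow hx.le (Real.rpow_nonneg hn.le a), ← Real.rpow_mul hn.le,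
      mul_inv_cancel₀ ha0.ne', Real.rpow_one]
    ring
  have e2 : (s i * (i:ℝ) ^ a) ^ (-lam) = s i ^ (-lam) * (i:ℝ) ^ (1 - a) := by
    rw [Real.mul_rpow hx.le (Real.rpow_nonneg hn.le a), ← Real.rpow_mul hn.le]
    congr 1
    rw [hlam]
    field_simp
    rw [neg_sub]
  have e3 : (i:ℝ) ^ (a - 1) * (i:ℝ) ^ (1 - a) = 1 := by
    rw [← Real.rpow_add hn]; simp
  have e4 : s i ^ a⁻¹ = s i * s i ^ (-lam) := by
    nth_rewrite 2 [← Real.rpow_one (s i)]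
    rw [← Real.rpow_add hx]
    congr 1
    rw [hlam]; field_simp
    ring
  rw [e1, e2, e4, div_eq_mul_inv, ← Real.rpow_neg hx.le]
  linear_combination (c i * s i ^ (-lam)) * e3
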